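/- Let Q_X = {(Xu)_+ : u ∈ ℝ^d, ‖u‖₂ ≤ 1} ⊆ ℝ^n. Then Q_X is a compact set, and it is a finite union of compact convex sets; namely Q_X = ∪_{i=1}^P { D_i X u : ‖u‖₂ ≤ 1, (2D_i − I)Xu ≥ 0 }, where D_1,…,D_P enumerate the diagonal 0/1 matrices Diag(1[Xu ≥ 0]) realizable by some u ∈ ℝ^d. -/

import Mathlib

open Matrix

noncomputable def relu (t : ℝ) : ℝ := max t 0

noncomputable def l2norm {d : ℕ} (x : Fin d → ℝ) : ℝ := Real.sqrt (∑ i, x i ^ 2)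

lemma l2norm_eq_norm {d : ℕ} (u : Fin d → ℝ) :
    l2norm u = ‖(EuclideanSpace.equiv (Fin d) ℝ).symm u‖ := by
  simp [l2norm, EuclideanSpace.norm_eq, Real.norm_eq_abs, sq_abs]

lemma sball_eq {d : ℕ} :
    {u : Fin d → ℝ | l2norm u ≤ 1}
      = (EuclideanSpace.equiv (Fin d) ℝ) '' Metric.closedBall 0 1 := by
  ext u
  simp only [Set.mem_image, Metric.mem_closedBall, dist_zero_right, Set.mem_setOf_eq,
    l2norm_eq_norm]
  constructor
  · intro h
    exact ⟨_, h, (EuclideanSpace.equiv (Fin d) ℝ).apply_symm_apply u⟩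
  · rintro ⟨x, hx, rfl⟩
    simpa using hx

lemma sball_compact {d : ℕ} : IsCompact {u : Fin d → ℝ | l2norm u ≤ 1} := by
  rw [sball_eq]
  exact (isCompact_closedBall _ _).image (EuclideanSpace.equiv (Fin d) ℝ).continuous

lemma sball_convex {d : ℕ} : Convex ℝ {u : Fin d → ℝ | l2norm u ≤ 1} := by
  rw [sball_eq]
  exact (convex_closedBall (0 : EuclideanSpace ℝ (Fin d)) 1).linear_image
    ((EuclideanSpace.equiv (Fin d) ℝ).toLinearEquiv.toLinearMap)

lemma mulVec_cont {n d : ℕ} (M : Matrix (Fin n) (Fin d) ℝ) : Continuous (M.mulVec) :=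
  M.mulVecLin.continuous_of_finiteDimensional

lemma halfspaces_closed {n d : ℕ} (M : Matrix (Fin n) (Fin d) ℝ) :
    IsClosed {u : Fin d → ℝ | ∀ i, 0 ≤ M.mulVec u i} := by
  have h : {u : Fin d → ℝ | ∀ i, 0 ≤ M.mulVec u i}
      = ⋂ i, (fun u => M.mulVec u i) ⁻¹' Set.Ici 0 := by
    ext u; simp
  rw [h]
  exact isClosed_iInter fun i =>
    (isClosed_Ici).preimage ((continuous_apply i).comp (mulVec_cont M))

lemma halfspaces_convex {n d : ℕ} (M : Matrix (Fin n) (Fin d) ℝ) :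
    Convex ℝ {u : Fin d → ℝ | ∀ i, 0 ≤ M.mulVec u i} := by
  intro x hx y hy a b ha hb hab i
  have h : M.mulVec (a • x + b • y) i = a * M.mulVec x i + b * M.mulVec y i := by
    simp [Matrix.mulVec_add, Matrix.mulVec_smul]
  rw [h]
  exact add_nonneg (mul_nonneg ha (hx i)) (mul_nonneg hb (hy i))

lemma twoD_sub_one {n : ℕ} (χ v : Fin n → ℝ) (i : Fin n) :
    (((2 : ℝ) • Matrix.diagonal χ - 1).mulVec v) i = 2 * χ i * v i - v i := by
  simp [Matrix.sub_mulVec, Matrix.smul_mulVec, Matrix.mulVec_diagonal,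
    Matrix.one_mulVec, mul_assoc]

/-- The rectified ellipsoid `Q_X = {(Xu)_+ : ‖u‖₂ ≤ 1}` is compact and is the union, over the
finitely many realizable activation patterns `D_i = Diag(1[Xu ≥ 0])`, of the compact convex
sets `{D_i X u : ‖u‖₂ ≤ 1, (2D_i − I)Xu ≥ 0}`. -/
theorem rectified_ellipsoid_decomposition {n d : ℕ} (X : Matrix (Fin n) (Fin d) ℝ) :
    let Q : Set (Fin n → ℝ) :=
      {w | ∃ u : Fin d → ℝ, l2norm u ≤ 1 ∧ w = fun i => relu ((X.mulVec u) i)}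
    let 𝒟 : Set (Matrix (Fin n) (Fin n) ℝ) :=
      {D | ∃ u : Fin d → ℝ,
        D = Matrix.diagonal (fun i => if 0 ≤ (X.mulVec u) i then (1 : ℝ) else 0)}
    let piece : Matrix (Fin n) (Fin n) ℝ → Set (Fin n → ℝ) := fun D =>
      {w | ∃ u : Fin d → ℝ, l2norm u ≤ 1 ∧
        (∀ i, 0 ≤ (((2 : ℝ) • D - 1).mulVec (X.mulVec u)) i) ∧
        w = D.mulVec (X.mulVec u)}
    IsCompact Q ∧ 𝒟.Finite ∧ Q = ⋃ D ∈ 𝒟, piece D ∧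
      ∀ D ∈ 𝒟, IsCompact (piece D) ∧ Convex ℝ (piece D) := by
  intro Q 𝒟 piece
  -- finiteness of the set of activation patterns
  have hfin : 𝒟.Finite := by
    apply Set.Finite.subset (Set.finite_range
      (fun s : Fin n → Bool => Matrix.diagonal (fun i => if s i then (1 : ℝ) else 0)))
    rintro D ⟨u, rfl⟩
    exact ⟨fun i => decide (0 ≤ X.mulVec u i), by simp⟩
  -- pieces are compact and convex
  have hpiece : ∀ D ∈ 𝒟, IsCompact (piece D) ∧ Convex ℝ (piece D) := by
    intro D hD
    have himg : piece D = (fun u => (D * X).mulVec u) ''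
        ({u | l2norm u ≤ 1} ∩ {u | ∀ i, 0 ≤ (((2 : ℝ) • D - 1) * X).mulVec u i}) := by
      ext w
      simp only [Set.mem_image, Set.mem_inter_iff, Set.mem_setOf_eq, piece]
      constructor
      · rintro ⟨u, h1, h2, rfl⟩
        exact ⟨u, ⟨h1, fun i => by simpa [← Matrix.mulVec_mulVec] using h2 i⟩,
          by rw [← Matrix.mulVec_mulVec]⟩
      · rintro ⟨u, ⟨h1, h2⟩, rfl⟩
        exact ⟨u, h1, fun i => by simpa [← Matrix.mulVec_mulVec] using h2 i,
          by rw [← Matrix.mulVec_mulVec]⟩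
    have hS : IsCompact ({u : Fin d → ℝ | l2norm u ≤ 1} ∩
        {u | ∀ i, 0 ≤ (((2 : ℝ) • D - 1) * X).mulVec u i}) :=
      sball_compact.inter_right (halfspaces_closed _)
    have hC : Convex ℝ ({u : Fin d → ℝ | l2norm u ≤ 1} ∩
        {u | ∀ i, 0 ≤ (((2 : ℝ) • D - 1) * X).mulVec u i}) :=
      sball_convex.inter (halfspaces_convex _)
    constructor
    · rw [himg]
      exact hS.image (mulVec_cont (D * X))
    · rw [himg]
      exact hC.linear_image ((D * X).mulVecLin)
  -- the decomposition
  have hQ : Q = ⋃ D ∈ 𝒟, piece D := by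
    ext w
    simp only [Set.mem_iUnion, Q, piece, Set.mem_setOf_eq, exists_prop, 𝒟]
    constructor
    · rintro ⟨u, hu, rfl⟩
      set v := X.mulVec u with hv
      set χ : Fin n → ℝ := fun i => if 0 ≤ v i then 1 else 0 with hχ
      refine ⟨Matrix.diagonal χ, ⟨u, rfl⟩, u, hu, ?_, ?_⟩
      · intro i
        rw [twoD_sub_one]
        by_cases h : 0 ≤ v i
        · simp only [hχ, if_pos h]; linarith
        · simp only [hχ, if_neg h]; push_neg at h; linarith
      · funext i
        rw [Matrix.mulVec_diagonal]
        by_cases h : 0 ≤ v i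
        · simp [relu, hχ, if_pos h, max_eq_left h]; rfl
        · push_neg at h
          simp [relu, hχ, if_neg (not_le.mpr h), max_eq_right h.le]
    · rintro ⟨D, ⟨u₀, rfl⟩, u, hu, hcon, rfl⟩
      refine ⟨u, hu, ?_⟩
      funext i
      rw [Matrix.mulVec_diagonal]
      have hc := hcon i
      rw [twoD_sub_one] at hc
      by_cases h : 0 ≤ X.mulVec u₀ i
      · simp only [if_pos h] at hc ⊢
        have hvi : 0 ≤ X.mulVec u i := by linarith
        simp [relu, max_eq_left hvi]
      · simp only [if_neg h] at hc ⊢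
        have hvi : X.mulVec u i ≤ 0 := by linarith
        simp [relu, max_eq_right hvi]
  refine ⟨?_, hfin, hQ, hpiece⟩
  rw [hQ]
  exact hfin.isCompact_biUnion fun D hD => (hpiece D hD).1
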